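/- arXiv:2004.00315 — 6 statements merged into one kernel-verified Lean document; each statement's English description precedes it below -/
import Mathlib

section
/- For every novel class n ∈ N, the set function g_n : 2^{B_u} → ℝ defined by g_n(U) = M^K(n, B_s ∪ U) is monotone non-decreasing and submodular on the subsets of B_u. -/
/-- The max-K-sum `M^K(A)`: the sum of the `K` largest values of `w` over the
finite set `A` (the sum of all of them if `|A| < K`). -/
noncomputable def topKSum {α : Type*} (w : α → ℝ) (K : ℕ) (A : Finset α) : ℝ :=
  (((A.val.map w).sort (· ≥ ·)).take K).sum


/-- Any submultiset of at most `K` elements of a nonneg, descending-sorted list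
has sum at most the sum of the first `K` entries. -/
lemma sum_le_sum_take (l : List ℝ) (hl : l.Pairwise (· ≥ ·)) (h0 : ∀ x ∈ l, 0 ≤ x) :
    ∀ (K : ℕ) (t : Multiset ℝ), t ≤ ↑l → Multiset.card t ≤ K → t.sum ≤ (l.take K).sum := by
  induction l with
  | nil =>
      intro K t ht _
      simp only [Multiset.coe_nil] at ht
      simp [Multiset.le_zero.mp ht]
  | cons a l' ih =>
      intro K t ht hc
      have hl' : l'.Pairwise (· ≥ ·) := hl.tail
      have h0' : ∀ x ∈ l', 0 ≤ x := fun x hx => h0 x (List.mem_cons_of_mem _ hx)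
      cases K with
      | zero =>
          have : t = 0 := Multiset.card_eq_zero.mp (Nat.le_zero.mp hc)
          simp [this]
      | succ K' =>
          have htake : (List.take (K' + 1) (a :: l')).sum = a + (List.take K' l').sum := by
            simp [List.take_succ_cons]
          rw [htake]
          by_cases hat : a ∈ t
          · have h1 : t.erase a ≤ ↑l' := by
              have := Multiset.erase_le_erase a ht
              simpa using this
            have hpos : 0 < Multiset.card t := Multiset.card_pos_iff_exists_mem.mpr ⟨a, hat⟩
            have h2 : Multiset.card (t.erase a) ≤ K' := by
              rw [Multiset.card_erase_of_mem hat, Nat.pred_eq_sub_one]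
              omega
            have := ih hl' h0' K' (t.erase a) h1 h2
            have hsum : a + (t.erase a).sum = t.sum := Multiset.sum_erase hat
            linarith
          · have h1 : t ≤ ↑l' := by
              rw [Multiset.le_iff_count] at ht ⊢
              intro b
              rcases eq_or_ne b a with rfl | hb
              · simp [Multiset.count_eq_zero_of_notMem hat]
              · have := ht b
                simpa [Multiset.count_cons, List.count_cons, hb, hb.symm] using this
            have hIH := ih hl' h0' (K' + 1) t h1 hc
            have hstep : (List.take (K' + 1) l').sum ≤ a + (List.take K' l').sum := by
              rw [List.take_succ]
              rcases h : l'[K']? with _ | x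
              · have ha0 : 0 ≤ a := h0 a List.mem_cons_self
                simp [h]; linarith
              · have hx : x ∈ l' := List.mem_of_getElem? h
                have : a ≥ x := List.rel_of_pairwise_cons hl hx
                simp [h]; linarith
            linarith

/-- Lift a submultiset of a mapped multiset. -/
lemma exists_premap {α β : Type*} (f : α → β) (s : Multiset α) :
    ∀ t : Multiset β, t ≤ s.map f → ∃ u ≤ s, u.map f = t := by
  classical
  induction s using Multiset.induction with
  | empty =>
      intro t ht
      simp only [Multiset.map_zero, Multiset.le_zero] at ht
      exact ⟨0, le_refl _, by simp [ht]⟩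
  | cons a s' ih =>
      intro t ht
      rw [Multiset.map_cons] at ht
      by_cases hft : f a ∈ t
      · have h1 : t.erase (f a) ≤ s'.map f := by
          have := Multiset.erase_le_erase (f a) ht
          simpa using this
        obtain ⟨u', hu'le, hu'map⟩ := ih _ h1
        refine ⟨a ::ₘ u', Multiset.cons_le_cons a hu'le, ?_⟩
        rw [Multiset.map_cons, hu'map, Multiset.cons_erase hft]
      · have h1 : t ≤ s'.map f := by
          rw [Multiset.le_iff_count] at ht ⊢
          intro b
          rcases eq_or_ne b (f a) with rfl | hb
          · simp [Multiset.count_eq_zero_of_notMem hft]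
          · have := ht b
            simpa [Multiset.count_cons, hb] using this
        obtain ⟨u', hu'le, hu'map⟩ := ih _ h1
        exact ⟨u', le_trans hu'le (Multiset.le_cons_self _ _), hu'map⟩

lemma sum_le_topKSum {β : Type*} (w : β → ℝ) (K : ℕ) (A X : Finset β)
    (hX : X ⊆ A) (hc : X.card ≤ K) (h0 : ∀ b ∈ A, 0 ≤ w b) :
    ∑ x ∈ X, w x ≤ topKSum w K A := by
  classical
  set l : List ℝ := ((A.val.map w).sort (· ≥ ·)) with hldef
  have hlcoe : (↑l : Multiset ℝ) = A.val.map w := Multiset.sort_eq _ _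
  have hsorted : l.Pairwise (· ≥ ·) := Multiset.pairwise_sort _ _
  have hnn : ∀ x ∈ l, 0 ≤ x := by
    intro x hx
    have : x ∈ A.val.map w := by rw [← hlcoe]; exact_mod_cast hx
    obtain ⟨b, hb, rfl⟩ := Multiset.mem_map.mp this
    exact h0 b hb
  have ht : (X.val.map w : Multiset ℝ) ≤ ↑l := by
    rw [hlcoe]
    exact Multiset.map_le_map (Finset.val_le_iff.mpr hX)
  have hcard : Multiset.card (X.val.map w) ≤ K := by
    rw [Multiset.card_map]
    exact hc
  have := sum_le_sum_take l hsorted hnn K (X.val.map w) ht hcard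
  rw [Finset.sum_eq_multiset_sum]
  exact this

lemma exists_subset_sum_eq_topKSum {β : Type*} (w : β → ℝ) (K : ℕ) (A : Finset β) :
    ∃ X ⊆ A, X.card ≤ K ∧ ∑ x ∈ X, w x = topKSum w K A := by
  classical
  set l : List ℝ := ((A.val.map w).sort (· ≥ ·)) with hldef
  have hlcoe : (↑l : Multiset ℝ) = A.val.map w := Multiset.sort_eq _ _
  have hle : (↑(l.take K) : Multiset ℝ) ≤ A.val.map w := by
    rw [← hlcoe]
    exact Multiset.coe_le.mpr (List.take_sublist K l).subperm
  obtain ⟨u, hule, humap⟩ := exists_premap w A.val _ hle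
  have hnd : u.Nodup := Multiset.nodup_of_le hule A.nodup
  refine ⟨⟨u, hnd⟩, Finset.val_le_iff.mp hule, ?_, ?_⟩
  · have h1 : Multiset.card u = (l.take K).length := by
      have := congrArg Multiset.card humap
      simpa using this
    have : (l.take K).length ≤ K := by simp
    simp only [Finset.card_def]
    omega
  · rw [Finset.sum_eq_multiset_sum]
    show (Multiset.map w u).sum = topKSum w K A
    rw [humap]
    simp [topKSum, hldef]

/-- For every novel class `n ∈ N`, the set function `g_n(U) = M^K(n, B_s ∪ U)` is
monotone non-decreasing and submodular on the subsets of `B_u`. -/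
theorem similarity_topK_monotone_submodular {β ν : Type*} [DecidableEq β]
    (Bu Bs : Finset β) (N : Finset ν) (f : ν → β → ℝ) (K : ℕ)
    (hBu : Bu.Nonempty) (hN : N.Nonempty) (hdisj : Disjoint Bs Bu) (hK : 1 ≤ K)
    (hf : ∀ n ∈ N, ∀ b ∈ Bs ∪ Bu, 0 ≤ f n b) :
    ∀ n ∈ N,
      (∀ A B : Finset β, A ⊆ Bu → B ⊆ Bu → A ⊆ B →
        topKSum (f n) K (Bs ∪ A) ≤ topKSum (f n) K (Bs ∪ B)) ∧
      (∀ A B : Finset β, A ⊆ Bu → B ⊆ Bu →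
        topKSum (f n) K (Bs ∪ (A ∩ B)) + topKSum (f n) K (Bs ∪ (A ∪ B)) ≤
          topKSum (f n) K (Bs ∪ A) + topKSum (f n) K (Bs ∪ B)) := by
  intro n hn
  have hw : ∀ b ∈ Bs ∪ Bu, 0 ≤ f n b := hf n hn
  constructor
  · -- monotone
    intro A B hA hB hAB
    obtain ⟨X, hXsub, hXcard, hXsum⟩ := exists_subset_sum_eq_topKSum (f n) K (Bs ∪ A)
    rw [← hXsum]
    refine sum_le_topKSum _ _ _ _
      (hXsub.trans (Finset.union_subset_union_right hAB)) hXcard ?_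
    intro b hb
    exact hw b (Finset.union_subset_union_right hB hb)
  · -- submodular
    intro A B hA hB
    obtain ⟨X, hXsub, hXcard, hXsum⟩ :=
      exists_subset_sum_eq_topKSum (f n) K (Bs ∪ (A ∪ B))
    obtain ⟨Y, hYsub, hYcard, hYsum⟩ :=
      exists_subset_sum_eq_topKSum (f n) K (Bs ∪ (A ∩ B))
    set P : Finset β := Bs ∪ A with hP
    set XA : Finset β := X ∩ P with hXA
    set XB : Finset β := X \ P with hXB
    set YA : Finset β := Y ∩ XB with hYA
    set YB : Finset β := Y ∩ XA with hYB
    set R : Finset β := Y \ X with hR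
    -- basic structure
    have hXsplit : XA ∪ XB = X := by
      rw [hXA, hXB, Finset.union_comm]; exact Finset.sdiff_union_inter X P
    have hdisjXAB : Disjoint XA XB := (Finset.disjoint_sdiff_inter X P).symm
    have hYAsubXB : YA ⊆ XB := Finset.inter_subset_right
    have hYBsubXA : YB ⊆ XA := Finset.inter_subset_right
    have hdisjXAYA : Disjoint XA YA := (hdisjXAB.mono_right hYAsubXB)
    have hdisjXBYB : Disjoint XB YB := (hdisjXAB.symm.mono_right hYBsubXA)
    have hdisjYAYB : Disjoint YA YB := (hdisjXAB.symm.mono hYAsubXB hYBsubXA)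
    have hRdisjX : Disjoint R X := Finset.sdiff_disjoint
    -- cardinality facts
    have ha : XA.card + YA.card ≤ K := by
      have h1 : XA ∪ YA ⊆ X := by
        rw [← hXsplit]
        exact Finset.union_subset Finset.subset_union_left
          (hYAsubXB.trans Finset.subset_union_right)
      calc XA.card + YA.card = (XA ∪ YA).card := (Finset.card_union_of_disjoint hdisjXAYA).symm
        _ ≤ X.card := Finset.card_le_card h1
        _ ≤ K := hXcard
    have hb2 : XB.card + YB.card ≤ K := by
      have h1 : XB ∪ YB ⊆ X := by
        rw [← hXsplit]
        exact Finset.union_subset Finset.subset_union_right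
          (hYBsubXA.trans Finset.subset_union_left)
      calc XB.card + YB.card = (XB ∪ YB).card := (Finset.card_union_of_disjoint hdisjXBYB).symm
        _ ≤ X.card := Finset.card_le_card h1
        _ ≤ K := hXcard
    have hYX : YA ∪ YB = Y ∩ X := by
      rw [hYA, hYB, ← Finset.inter_union_distrib_left, hXB, hXA, Finset.sdiff_union_inter]
    have hcardYX : YA.card + YB.card + R.card = Y.card := by
      have h1 : (YA ∪ YB).card = YA.card + YB.card := Finset.card_union_of_disjoint hdisjYAYB
      have h2 : (Y ∩ X).card + (Y \ X).card = Y.card := by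
        rw [Finset.card_inter_add_card_sdiff]
      rw [← h2, ← hYX, h1, hR]
    -- choose the split of R
    set m : ℕ := min (K - (XA.card + YA.card)) R.card with hm
    obtain ⟨Y1, hY1sub, hY1card⟩ := Finset.exists_subset_card_eq (min_le_right (K - (XA.card + YA.card)) R.card)
    set Y2 : Finset β := R \ Y1 with hY2
    have hY2sub : Y2 ⊆ R := Finset.sdiff_subset
    have hY2card : Y2.card = R.card - m := by
      rw [hY2, Finset.card_sdiff_of_subset hY1sub, hY1card]
    have hdisjY12 : Disjoint Y1 Y2 := Finset.disjoint_sdiff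
    -- the two witness sets
    set S : Finset β := XA ∪ YA ∪ Y1 with hS
    set T : Finset β := XB ∪ YB ∪ Y2 with hT
    -- card bounds
    have hScard : S.card ≤ K := by
      rw [hS]
      have := Finset.card_union_le (XA ∪ YA) Y1
      have h2 := Finset.card_union_le XA YA
      have hmK : m ≤ K - (XA.card + YA.card) := min_le_left _ _
      rw [hY1card] at this
      omega
    have hTcard : T.card ≤ K := by
      rw [hT]
      have := Finset.card_union_le (XB ∪ YB) Y2
      have h2 := Finset.card_union_le XB YB
      have habr : XA.card + YA.card + (XB.card + YB.card) + R.card ≤ 2 * K := by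
        have hXc : XA.card + XB.card = X.card := by
          rw [← Finset.card_union_of_disjoint hdisjXAB, hXsplit]
        omega
      rw [hY2card] at this
      omega
    -- subset facts
    have hYsubA : Y ⊆ Bs ∪ A :=
      hYsub.trans (Finset.union_subset_union_right Finset.inter_subset_left)
    have hYsubB : Y ⊆ Bs ∪ B :=
      hYsub.trans (Finset.union_subset_union_right Finset.inter_subset_right)
    have hSsub : S ⊆ Bs ∪ A := by
      refine Finset.union_subset (Finset.union_subset ?_ ?_) ?_
      · exact Finset.inter_subset_right
      · exact (Finset.inter_subset_left).trans hYsubA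
      · exact (hY1sub.trans (Finset.sdiff_subset)).trans hYsubA
    have hXBsubB : XB ⊆ Bs ∪ B := by
      intro x hx
      rw [hXB, Finset.mem_sdiff] at hx
      obtain ⟨hx1, hx2⟩ := hx
      have := hXsub hx1
      rw [Finset.mem_union] at this ⊢
      rcases this with h | h
      · exact absurd (Finset.mem_union_left _ h) hx2
      · rw [Finset.mem_union] at h
        rcases h with h | h
        · exact absurd (Finset.mem_union_right _ h) hx2
        · exact Or.inr h
    have hTsub : T ⊆ Bs ∪ B := by
      refine Finset.union_subset (Finset.union_subset hXBsubB ?_) ?_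
      · exact (Finset.inter_subset_left).trans hYsubB
      · exact (hY2sub.trans (Finset.sdiff_subset)).trans hYsubB
    -- sum identity
    have hXAsubX : XA ⊆ X := Finset.inter_subset_left
    have hXBsubX : XB ⊆ X := Finset.sdiff_subset
    have hY1subR : Y1 ⊆ R := hY1sub
    have hdisjS1 : Disjoint (XA ∪ YA) Y1 :=
      hRdisjX.symm.mono (Finset.union_subset hXAsubX (hYAsubXB.trans hXBsubX)) hY1subR
    have hdisjT1 : Disjoint (XB ∪ YB) Y2 :=
      hRdisjX.symm.mono (Finset.union_subset hXBsubX (hYBsubXA.trans hXAsubX)) hY2sub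
    have eS : ∑ x ∈ S, f n x = ∑ x ∈ XA, f n x + ∑ x ∈ YA, f n x + ∑ x ∈ Y1, f n x := by
      rw [hS, Finset.sum_union hdisjS1, Finset.sum_union hdisjXAYA]
    have eT : ∑ x ∈ T, f n x = ∑ x ∈ XB, f n x + ∑ x ∈ YB, f n x + ∑ x ∈ Y2, f n x := by
      rw [hT, Finset.sum_union hdisjT1, Finset.sum_union hdisjXBYB]
    have eX : ∑ x ∈ X, f n x = ∑ x ∈ XA, f n x + ∑ x ∈ XB, f n x := by
      rw [← hXsplit, Finset.sum_union hdisjXAB]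
    have hY12 : Y1 ∪ Y2 = R := by
      rw [hY2]
      exact Finset.union_sdiff_of_subset hY1sub
    have hYdecomp : YA ∪ YB ∪ (Y1 ∪ Y2) = Y := by
      rw [hYX, hY12, hR, Finset.union_comm]
      exact Finset.sdiff_union_inter Y X
    have hdisjYR : Disjoint (YA ∪ YB) (Y1 ∪ Y2) := by
      rw [hY12]
      exact hRdisjX.symm.mono
        (Finset.union_subset (hYAsubXB.trans hXBsubX) (hYBsubXA.trans hXAsubX)) le_rfl
    have eY : ∑ x ∈ Y, f n x =
        ∑ x ∈ YA, f n x + ∑ x ∈ YB, f n x + (∑ x ∈ Y1, f n x + ∑ x ∈ Y2, f n x) := by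
      rw [← hYdecomp, Finset.sum_union hdisjYR, Finset.sum_union hdisjYAYB,
        Finset.sum_union hdisjY12]
    -- conclude
    have hSle : ∑ x ∈ S, f n x ≤ topKSum (f n) K (Bs ∪ A) :=
      sum_le_topKSum (f n) K (Bs ∪ A) S hSsub hScard
        (fun b hb => hw b (Finset.union_subset_union_right hA hb))
    have hTle : ∑ x ∈ T, f n x ≤ topKSum (f n) K (Bs ∪ B) :=
      sum_le_topKSum (f n) K (Bs ∪ B) T hTsub hTcard
        (fun b hb => hw b (Finset.union_subset_union_right hB hb))
    rw [← hXsum, ← hYsum]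
    linarith
end

section
/- Suppose λ = 0 and B_s = ∅, so h(U) = (1/(|N|·K)) Σ_{n∈N} M^K(n,U) for U ⊆ B_u. Then h is a normalized (h(∅) = 0), monotone non-decreasing, submodular set function on the subsets of B_u; hence the base-class selection problem max{ h(U) : U ⊆ B_u, |U| = m } is a submodular monotone non-decreasing maximization with exact cardinality constraint. -/
/-- The selection objective
`h(U) = (1/(|N|·K)) Σ_{n∈N} M^K(n, B_s ∪ U) − (λ/(|N|·(|B_s|+m))) Σ_{n∈N} Σ_{u∈B_s∪U} f(n,u)`. -/
noncomputable def selObj {β ν : Type*} [DecidableEq β]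
    (N : Finset ν) (f : ν → β → ℝ) (K : ℕ) (Bs : Finset β) (lam : ℝ) (m : ℕ)
    (U : Finset β) : ℝ :=
  (1 / ((N.card : ℝ) * (K : ℝ))) * ∑ n ∈ N, topKSum (f n) K (Bs ∪ U)
    - (lam / ((N.card : ℝ) * ((Bs.card : ℝ) + (m : ℝ)))) * ∑ n ∈ N, ∑ u ∈ Bs ∪ U, f n u

section Aux

variable {α : Type*} [DecidableEq α]

/-- The family of candidate subsets of `A` of size at most `K`. -/
def candSets (K : ℕ) (A : Finset α) : Finset (Finset α) :=
  A.powerset.filter (fun S => S.card ≤ K)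

lemma candSets_nonempty (K : ℕ) (A : Finset α) : (candSets K A).Nonempty :=
  ⟨∅, by simp [candSets]⟩

/-- The max over subsets of size at most `K` of the sum of weights. -/
noncomputable def maxS (w : α → ℝ) (K : ℕ) (A : Finset α) : ℝ :=
  (candSets K A).sup' (candSets_nonempty K A) (fun S => ∑ a ∈ S, w a)

lemma sum_le_maxS (w : α → ℝ) (K : ℕ) {A S : Finset α} (hS : S ⊆ A) (hc : S.card ≤ K) :
    ∑ a ∈ S, w a ≤ maxS w K A :=
  Finset.le_sup' (fun S => ∑ a ∈ S, w a)
    (by simp [candSets, Finset.mem_filter, Finset.mem_powerset, hS, hc])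

lemma exists_maxS (w : α → ℝ) (K : ℕ) (A : Finset α) :
    ∃ S, S ⊆ A ∧ S.card ≤ K ∧ maxS w K A = ∑ a ∈ S, w a := by
  obtain ⟨S, hS, hval⟩ := Finset.exists_mem_eq_sup' (candSets_nonempty K A)
    (fun S => ∑ a ∈ S, w a)
  simp only [candSets, Finset.mem_filter, Finset.mem_powerset] at hS
  exact ⟨S, hS.1, hS.2, hval⟩

lemma maxS_mono (w : α → ℝ) (K : ℕ) {A B : Finset α} (h : A ⊆ B) :
    maxS w K A ≤ maxS w K B := by
  obtain ⟨S, hS, hc, hval⟩ := exists_maxS w K A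
  rw [hval]
  exact sum_le_maxS w K (hS.trans h) hc

/-- Diminishing returns for `maxS`. -/
lemma maxS_dr (w : α → ℝ) (K : ℕ) {C D : Finset α} {x : α} (hCD : C ⊆ D) (hx : x ∉ D) :
    maxS w K (insert x D) + maxS w K C ≤ maxS w K (insert x C) + maxS w K D := by
  obtain ⟨S, hS, hSc, hSval⟩ := exists_maxS w K (insert x D)
  obtain ⟨T, hT, hTc, hTval⟩ := exists_maxS w K C
  have hxC : x ∉ C := fun h => hx (hCD h)
  have hxT : x ∉ T := fun h => hxC (hT h)
  by_cases hxS : x ∈ S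
  · have hS' : S.erase x ⊆ D := by
      intro a ha
      have hax : a ≠ x := Finset.ne_of_mem_erase ha
      rcases Finset.mem_insert.mp (hS (Finset.mem_of_mem_erase ha)) with h | h
      · exact absurd h hax
      · exact h
    have hScard : (S.erase x).card + 1 = S.card := Finset.card_erase_add_one hxS
    have hS'card : (S.erase x).card < K := by omega
    have hSsum : ∑ a ∈ S, w a = w x + ∑ a ∈ S.erase x, w a :=
      (Finset.add_sum_erase S w hxS).symm
    by_cases hTK : T.card < K
    · have h1 : ∑ a ∈ insert x T, w a ≤ maxS w K (insert x C) := by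
        refine sum_le_maxS w K (Finset.insert_subset_insert x hT) ?_
        rw [Finset.card_insert_of_notMem hxT]; omega
      have h2 : ∑ a ∈ S.erase x, w a ≤ maxS w K D :=
        sum_le_maxS w K hS' (by omega)
      rw [Finset.sum_insert hxT] at h1
      linarith
    · have hTK' : T.card = K := by omega
      have : ¬ T ⊆ S.erase x := by
        intro hsub
        have := Finset.card_le_card hsub
        omega
      obtain ⟨t, htT, htS'⟩ := Finset.not_subset.mp this
      have htC : t ∈ C := hT htT
      have htx : t ≠ x := fun h => hxC (h ▸ htC)
      have h1 : ∑ a ∈ insert x (T.erase t), w a ≤ maxS w K (insert x C) := by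
        refine sum_le_maxS w K ?_ ?_
        · exact Finset.insert_subset_insert x ((Finset.erase_subset t T).trans hT)
        · rw [Finset.card_insert_of_notMem (fun h => hxT (Finset.mem_of_mem_erase h))]
          have := Finset.card_erase_add_one htT
          omega
      have h2 : ∑ a ∈ insert t (S.erase x), w a ≤ maxS w K D := by
        refine sum_le_maxS w K (Finset.insert_subset (hCD htC) hS') ?_
        rw [Finset.card_insert_of_notMem htS']; omega
      rw [Finset.sum_insert (fun h => hxT (Finset.mem_of_mem_erase h))] at h1
      rw [Finset.sum_insert htS'] at h2
      have hTsum : ∑ a ∈ T, w a = w t + ∑ a ∈ T.erase t, w a :=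
        (Finset.add_sum_erase T w htT).symm
      linarith
  · have hSD : S ⊆ D := by
      intro a ha
      rcases Finset.mem_insert.mp (hS ha) with h | h
      · exact absurd (h ▸ ha) hxS
      · exact h
    have h1 : maxS w K (insert x D) ≤ maxS w K D := by
      rw [hSval]; exact sum_le_maxS w K hSD hSc
    have h2 : maxS w K C ≤ maxS w K (insert x C) :=
      maxS_mono w K (Finset.subset_insert x C)
    linarith

lemma maxS_telescope (w : α → ℝ) (K : ℕ) {C D : Finset α} (hCD : C ⊆ D) (E : Finset α)
    (hE : ∀ x ∈ E, x ∉ D) :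
    maxS w K (D ∪ E) + maxS w K C ≤ maxS w K (C ∪ E) + maxS w K D := by
  induction E using Finset.induction_on with
  | empty => simp [add_comm]
  | @insert x E hxE ih =>
      have hxD : x ∉ D := hE x (Finset.mem_insert_self x E)
      have ih' := ih (fun y hy => hE y (Finset.mem_insert_of_mem hy))
      have hsub : C ∪ E ⊆ D ∪ E := Finset.union_subset_union_left hCD
      have hxDE : x ∉ D ∪ E := by
        simp only [Finset.mem_union]
        rintro (h | h)
        · exact hxD h
        · exact hxE h
      have dr := maxS_dr w K hsub hxDE
      have e1 : D ∪ insert x E = insert x (D ∪ E) := Finset.union_insert x _ _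
      have e2 : C ∪ insert x E = insert x (C ∪ E) := Finset.union_insert x _ _
      rw [e1, e2]
      linarith

lemma maxS_submodular (w : α → ℝ) (K : ℕ) (A B : Finset α) :
    maxS w K (A ∩ B) + maxS w K (A ∪ B) ≤ maxS w K A + maxS w K B := by
  have h := maxS_telescope w K (Finset.inter_subset_right : A ∩ B ⊆ B) (A \ B)
    (fun x hx => (Finset.mem_sdiff.mp hx).2)
  have e1 : B ∪ A \ B = A ∪ B := by
    ext a; simp [Finset.mem_union, Finset.mem_sdiff]; tauto
  have e2 : A ∩ B ∪ A \ B = A := by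
    ext a; simp [Finset.mem_union, Finset.mem_inter, Finset.mem_sdiff]; tauto
  rw [e1, e2] at h
  linarith

/-- Pull back a sub-multiset along `map`. -/
lemma exists_le_map {β : Type*} (f : α → β) :
    ∀ (t : Multiset β) (s : Multiset α), t ≤ s.map f → ∃ u ≤ s, u.map f = t := by
  intro t
  induction t using Multiset.induction_on with
  | empty => intro s _; exact ⟨0, Multiset.zero_le s, rfl⟩
  | cons b t ih =>
      intro s hle
      have hb : b ∈ s.map f := Multiset.mem_of_le hle (Multiset.mem_cons_self b t)
      obtain ⟨a, ha, hfa⟩ := Multiset.mem_map.mp hb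
      have hs : s = a ::ₘ s.erase a := (Multiset.cons_erase ha).symm
      have hmap : s.map f = b ::ₘ (s.erase a).map f := by
        rw [hs]; simp [Multiset.map_cons, hfa]
      have ht : t ≤ (s.erase a).map f := by
        have := (Multiset.cons_le_cons_iff b).mp (hmap ▸ hle)
        exact this
      obtain ⟨u, hu, hmu⟩ := ih (s.erase a) ht
      refine ⟨a ::ₘ u, ?_, by simp [Multiset.map_cons, hfa, hmu]⟩
      rw [hs]
      exact Multiset.cons_le_cons a hu

lemma sum_take_succ_le {l : List ℝ} {a : ℝ} (ha : ∀ b ∈ l, b ≤ a) (ha0 : 0 ≤ a) (k : ℕ) :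
    (l.take (k + 1)).sum ≤ a + (l.take k).sum := by
  by_cases hk : k < l.length
  · rw [List.sum_take_succ l k hk]
    have : l[k] ≤ a := ha _ (l.getElem_mem hk)
    linarith
  · push_neg at hk
    rw [List.take_of_length_le hk, List.take_of_length_le (by omega)]
    linarith

lemma sum_take_le_of_sublist : ∀ {l₁ l₂ : List ℝ}, List.Sublist l₁ l₂ →
    l₂.Pairwise (· ≥ ·) → (∀ x ∈ l₂, 0 ≤ x) → ∀ K : ℕ,
    (l₁.take K).sum ≤ (l₂.take K).sum := by
  intro l₁ l₂ h
  induction h with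
  | slnil => intro _ _ K; simp
  | @cons l₁ l₂ a h ih =>
      intro hs hn K
      rw [List.pairwise_cons] at hs
      have h1 := ih hs.2 (fun x hx => hn x (List.mem_cons_of_mem a hx)) K
      have ha0 : 0 ≤ a := hn a (List.mem_cons_self (a := a) (l := l₂))
      cases K with
      | zero => simp
      | succ k =>
          have h2 : (l₂.take (k + 1)).sum ≤ a + (l₂.take k).sum :=
            sum_take_succ_le hs.1 ha0 k
          have h3 := ih hs.2 (fun x hx => hn x (List.mem_cons_of_mem a hx)) k
          calc (l₁.take (k+1)).sum ≤ (l₂.take (k+1)).sum := h1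
            _ ≤ a + (l₂.take k).sum := h2
            _ = ((a :: l₂).take (k+1)).sum := by simp
  | @cons_cons l₁ l₂ a h ih =>
      intro hs hn K
      rw [List.pairwise_cons] at hs
      cases K with
      | zero => simp
      | succ k =>
          have := ih hs.2 (fun x hx => hn x (List.mem_cons_of_mem a hx)) k
          simp only [List.take_succ_cons, List.sum_cons]
          linarith

lemma topKSum_eq_maxS (w : α → ℝ) (K : ℕ) (A : Finset α) (hA : ∀ a ∈ A, 0 ≤ w a) :
    topKSum w K A = maxS w K A := by
  set L : List ℝ := (A.val.map w).sort (· ≥ ·) with hL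
  have hLsort : L.Pairwise (· ≥ ·) := Multiset.pairwise_sort _ _
  have hLcoe : (L : Multiset ℝ) = A.val.map w := Multiset.sort_eq _ _
  have hLnn : ∀ x ∈ L, 0 ≤ x := by
    intro x hx
    have : x ∈ A.val.map w := by rw [← hLcoe]; exact_mod_cast hx
    obtain ⟨a, ha, rfl⟩ := Multiset.mem_map.mp this
    exact hA a ha
  apply le_antisymm
  · -- topKSum ≤ maxS
    have hsub : ((L.take K : List ℝ) : Multiset ℝ) ≤ A.val.map w := by
      rw [← hLcoe]
      exact Multiset.coe_le.mpr (List.take_sublist K L).subperm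
    obtain ⟨u, hu, hmu⟩ := exists_le_map w _ _ hsub
    have hnodup : u.Nodup := Multiset.nodup_of_le hu A.nodup
    set S : Finset α := ⟨u, hnodup⟩ with hS
    have hSA : S ⊆ A := Finset.val_le_iff.mp hu
    have hScard : S.card ≤ K := by
      have : (u.map w).card = (L.take K).length := by rw [hmu]; simp
      have h2 : u.card = (L.take K).length := by simpa using this
      have := L.length_take_le K
      simp only [Finset.card, hS]
      omega
    have hSsum : ∑ a ∈ S, w a = (L.take K).sum := by
      rw [Finset.sum_eq_multiset_sum]
      show (Multiset.map w u).sum = (L.take K).sum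
      rw [hmu]
      simp
    calc topKSum w K A = ∑ a ∈ S, w a := hSsum.symm
      _ ≤ maxS w K A := sum_le_maxS w K hSA hScard
  · -- maxS ≤ topKSum
    apply Finset.sup'_le
    intro S hSmem
    simp only [candSets, Finset.mem_filter, Finset.mem_powerset] at hSmem
    obtain ⟨hSA, hSc⟩ := hSmem
    set L' : List ℝ := (S.val.map w).sort (· ≥ ·) with hL'
    have hL'sort : L'.Pairwise (· ≥ ·) := Multiset.pairwise_sort _ _
    have hL'coe : (L' : Multiset ℝ) = S.val.map w := Multiset.sort_eq _ _
    have hsubperm : List.Subperm L' L := by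
      rw [← Multiset.coe_le, hLcoe, hL'coe]
      exact Multiset.map_le_map (Finset.val_le_iff.mpr hSA)
    have hsublist : List.Sublist L' L :=
      List.sublist_of_subperm_of_pairwise hsubperm hL'sort hLsort
    have hlen : L'.length ≤ K := by
      have : L'.length = S.card := by
        have := congrArg Multiset.card hL'coe
        simpa using this
      omega
    have : ∑ a ∈ S, w a = (L'.take K).sum := by
      rw [List.take_of_length_le hlen, Finset.sum_eq_multiset_sum]
      show (Multiset.map w S.val).sum = L'.sum
      rw [← hL'coe]
      simp
    rw [this]
    exact sum_take_le_of_sublist hsublist hLsort hLnn K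

end Aux

/-- For `λ = 0` and `B_s = ∅` (so `h(U) = (1/(|N|·K)) Σ_{n∈N} M^K(n,U)`), the
selection objective `h` is normalized (`h(∅) = 0`), monotone non-decreasing and
submodular on the subsets of `B_u`. -/
theorem selObj_lambda_zero_normalized_monotone_submodular {β ν : Type*} [DecidableEq β]
    (Bu : Finset β) (N : Finset ν) (f : ν → β → ℝ) (K m : ℕ)
    (hBu : Bu.Nonempty) (hN : N.Nonempty) (hK : 1 ≤ K) (hm : 1 ≤ m)
    (hf : ∀ n ∈ N, ∀ b ∈ Bu, 0 ≤ f n b) :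
    selObj N f K ∅ 0 m ∅ = 0 ∧
    (∀ A B : Finset β, A ⊆ Bu → B ⊆ Bu → A ⊆ B →
      selObj N f K ∅ 0 m A ≤ selObj N f K ∅ 0 m B) ∧
    (∀ A B : Finset β, A ⊆ Bu → B ⊆ Bu →
      selObj N f K ∅ 0 m (A ∩ B) + selObj N f K ∅ 0 m (A ∪ B) ≤
        selObj N f K ∅ 0 m A + selObj N f K ∅ 0 m B) := by
  have hsel : ∀ U : Finset β, selObj N f K ∅ 0 m U =
      (1 / ((N.card : ℝ) * (K : ℝ))) * ∑ n ∈ N, topKSum (f n) K U := by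
    intro U
    simp [selObj]
  have hc : 0 ≤ 1 / ((N.card : ℝ) * (K : ℝ)) := by positivity
  have heq : ∀ (U : Finset β), U ⊆ Bu → ∀ n ∈ N, topKSum (f n) K U = maxS (f n) K U := by
    intro U hU n hn
    exact topKSum_eq_maxS (f n) K U (fun a ha => hf n hn a (hU ha))
  refine ⟨?_, ?_, ?_⟩
  · rw [hsel]
    have : ∀ n ∈ N, topKSum (f n) K (∅ : Finset β) = 0 := by
      intro n _
      simp [topKSum]
    rw [Finset.sum_congr rfl this]
    simp
  · intro A B hA hB hAB
    rw [hsel, hsel]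
    apply mul_le_mul_of_nonneg_left _ hc
    apply Finset.sum_le_sum
    intro n hn
    rw [heq A hA n hn, heq B hB n hn]
    exact maxS_mono (f n) K hAB
  · intro A B hA hB
    rw [hsel, hsel, hsel, hsel, ← mul_add, ← mul_add]
    apply mul_le_mul_of_nonneg_left _ hc
    rw [← Finset.sum_add_distrib, ← Finset.sum_add_distrib]
    apply Finset.sum_le_sum
    intro n hn
    rw [heq A hA n hn, heq B hB n hn,
      heq (A ∩ B) ((Finset.inter_subset_left).trans hA) n hn,
      heq (A ∪ B) (Finset.union_subset hA hB) n hn]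
    exact maxS_submodular (f n) K A B
end

section
/- For every λ > 0 the selection objective h(U) = (1/(|N|·K)) Σ_{n∈N} M^K(n, B_s ∪ U) − (λ/(|N|·(|B_s|+m))) Σ_{n∈N} Σ_{u∈B_s∪U} f(n,u) is a submodular set function on the subsets of B_u (being the difference of a submodular function and a modular function); hence the base-class selection problem max{ h(U) : U ⊆ B_u, |U| = m } is a (possibly non-monotone) submodular maximization with exact cardinality constraint. -/
private lemma take_sum_mono {l : List ℝ} (hl : ∀ a ∈ l, 0 ≤ a) {n m : ℕ} (h : n ≤ m) :
    (l.take n).sum ≤ (l.take m).sum := by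
  have he : l.take n = (l.take m).take n := by rw [List.take_take, Nat.min_eq_left h]
  rw [he]
  exact List.Sublist.sum_le_sum (List.take_sublist _ _)
    (fun a ha => hl a (List.take_subset _ _ ha))

private lemma take_sum_cons_le {a : ℝ} {l : List ℝ} (ha0 : 0 ≤ a) (hal : ∀ x ∈ l, x ≤ a) :
    ∀ n : ℕ, (l.take n).sum ≤ ((a :: l).take n).sum
  | 0 => le_refl 0
  | (n + 1) => by
    rw [List.take_succ_cons, List.sum_cons]
    by_cases hn : n < l.length
    · rw [List.sum_take_succ l n hn]
      have := hal _ (l.getElem_mem hn)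
      linarith
    · push_neg at hn
      rw [List.take_of_length_le hn, List.take_of_length_le (le_trans hn (Nat.le_succ n))]
      linarith

private lemma sublist_sum_le_take {s l : List ℝ} (h : s.Sublist l) (hsort : l.Pairwise (· ≥ ·))
    (hl : ∀ a ∈ l, 0 ≤ a) : s.sum ≤ (l.take s.length).sum := by
  induction h with
  | slnil => simp
  | @cons l₁ l₂ a h ih =>
    have hs2 : l₂.Pairwise (· ≥ ·) := hsort.of_cons
    have hl2 : ∀ x ∈ l₂, 0 ≤ x := fun x hx => hl x (List.mem_cons_of_mem _ hx)
    have hal : ∀ x ∈ l₂, x ≤ a := fun x hx => List.rel_of_pairwise_cons hsort hx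
    exact (ih hs2 hl2).trans (take_sum_cons_le (hl a (List.mem_cons_self (a := a) (l := l₂))) hal _)
  | @cons_cons l₁ l₂ a h ih =>
    simp only [List.length_cons, List.take_succ_cons, List.sum_cons]
    have := ih hsort.of_cons (fun x hx => hl x (List.mem_cons_of_mem _ hx))
    linarith

private lemma sum_le_topKSum_s3 {α : Type*} {w : α → ℝ} {K : ℕ} {A T : Finset α}
    (hT : T ⊆ A) (hcard : T.card ≤ K) (hw : ∀ a ∈ A, 0 ≤ w a) :
    ∑ t ∈ T, w t ≤ topKSum w K A := by
  classical
  set lT := (T.val.map w).sort (· ≥ ·) with hlT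
  set lA := (A.val.map w).sort (· ≥ ·) with hlA
  have hnn : ∀ x ∈ lA, 0 ≤ x := by
    intro x hx
    rw [hlA, Multiset.mem_sort, Multiset.mem_map] at hx
    obtain ⟨a, ha, rfl⟩ := hx
    exact hw a ha
  have hsub : lT.Sublist lA := by
    refine List.sublist_of_subperm_of_pairwise ?_ (Multiset.pairwise_sort _ _)
      (Multiset.pairwise_sort _ _)
    rw [← Multiset.coe_le, hlT, hlA, Multiset.sort_eq, Multiset.sort_eq]
    exact Multiset.map_le_map (Finset.val_le_iff.mpr hT)
  have hlen : lT.length = T.card := by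
    rw [hlT, Multiset.length_sort, Multiset.card_map]; rfl
  have h1 : ∑ t ∈ T, w t = lT.sum := by
    rw [show (∑ t ∈ T, w t) = (T.val.map w).sum from rfl, ← Multiset.sum_coe, hlT,
      Multiset.sort_eq]
  rw [h1]
  calc lT.sum ≤ (lA.take lT.length).sum :=
        sublist_sum_le_take hsub (Multiset.pairwise_sort _ _) hnn
    _ ≤ (lA.take K).sum := take_sum_mono hnn (by rw [hlen]; exact hcard)

private lemma exists_preimage_of_le_map {α β : Type*} [DecidableEq α] [DecidableEq β]
    {f : α → β} {s : Multiset β} : ∀ {t : Multiset α}, s ≤ t.map f →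
    ∃ u, u ≤ t ∧ u.map f = s := by
  induction s using Multiset.induction with
  | empty => exact fun _ => ⟨0, Multiset.zero_le _, rfl⟩
  | cons a s ih =>
    intro t h
    have ha : a ∈ t.map f := Multiset.mem_of_le h (Multiset.mem_cons_self a s)
    obtain ⟨b, hb, rfl⟩ := Multiset.mem_map.mp ha
    have hs : s ≤ (t.erase b).map f := by
      have h1 : s ≤ (t.map f).erase (f b) := by
        have h2 := Multiset.erase_le_erase (f b) h
        rwa [Multiset.erase_cons_head] at h2
      have h2 : (t.map f).erase (f b) = (t.erase b).map f := by
        conv_lhs => rw [← Multiset.cons_erase hb, Multiset.map_cons,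
          Multiset.erase_cons_head]
      rwa [h2] at h1
    obtain ⟨u, hu, hmap⟩ := ih hs
    refine ⟨b ::ₘ u, ?_, by rw [Multiset.map_cons, hmap]⟩
    calc b ::ₘ u ≤ b ::ₘ t.erase b := Multiset.cons_le_cons _ hu
      _ = t := Multiset.cons_erase hb

private lemma exists_topKSum {α : Type*} [DecidableEq α] (w : α → ℝ) (K : ℕ) (A : Finset α) :
    ∃ T : Finset α, T ⊆ A ∧ T.card ≤ K ∧ ∑ t ∈ T, w t = topKSum w K A := by
  classical
  set lA := (A.val.map w).sort (· ≥ ·) with hlA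
  have h1 : (↑(lA.take K) : Multiset ℝ) ≤ A.val.map w := by
    conv_rhs => rw [← Multiset.sort_eq (A.val.map w) (· ≥ ·)]
    exact Multiset.coe_le.mpr (List.take_sublist _ _).subperm
  obtain ⟨u, hu, hmap⟩ := exists_preimage_of_le_map h1
  have hnd : u.Nodup := Multiset.nodup_of_le hu A.nodup
  refine ⟨⟨u, hnd⟩, Finset.val_le_iff.mp hu, ?_, ?_⟩
  · have hc : Multiset.card u = (lA.take K).length := by
      rw [← Multiset.card_map w u, hmap, Multiset.coe_card]
    calc Finset.card ⟨u, hnd⟩ = Multiset.card u := rfl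
      _ = (lA.take K).length := hc
      _ ≤ K := List.length_take_le K lA
  · calc ∑ t ∈ (⟨u, hnd⟩ : Finset α), w t = (u.map w).sum := rfl
      _ = (↑(lA.take K) : Multiset ℝ).sum := by rw [hmap]
      _ = (lA.take K).sum := Multiset.sum_coe _
      _ = topKSum w K A := rfl

private lemma topKSum_submodular {α : Type*} [DecidableEq α] (w : α → ℝ) (K : ℕ)
    (S T : Finset α) (hw : ∀ a ∈ S ∪ T, 0 ≤ w a) :
    topKSum w K (S ∩ T) + topKSum w K (S ∪ T) ≤ topKSum w K S + topKSum w K T := by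
  obtain ⟨X, hXsub, hXcard, hXsum⟩ := exists_topKSum w K (S ∪ T)
  obtain ⟨Y, hYsub, hYcard, hYsum⟩ := exists_topKSum w K (S ∩ T)
  have hYS : Y ⊆ S := hYsub.trans Finset.inter_subset_left
  have hYT : Y ⊆ T := hYsub.trans Finset.inter_subset_right
  -- cardinality facts
  have hXsplit : (X ∩ S).card + (X \ S).card = X.card := Finset.card_inter_add_card_sdiff X S
  have hYsplit : (Y ∩ X).card + (Y \ X).card = Y.card := Finset.card_inter_add_card_sdiff Y X
  have hYXle : (Y ∩ X).card ≤ (X ∩ S).card := by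
    apply Finset.card_le_card
    intro y hy
    rw [Finset.mem_inter] at hy ⊢
    exact ⟨hy.2, hYS hy.1⟩
  -- choose P0 ⊆ Y \ X
  obtain ⟨P0, hP0sub, hP0card⟩ :=
    Finset.exists_subset_card_eq (Nat.min_le_left (Y \ X).card (K - (X ∩ S).card))
  set Q0 := (Y \ X) \ P0 with hQ0
  have hQ0card : Q0.card = (Y \ X).card - P0.card := Finset.card_sdiff_of_subset hP0sub
  set SA := (X ∩ S) ∪ P0 with hSA
  set SB := ((X \ S) ∪ (Y ∩ X)) ∪ Q0 with hSB
  -- subset facts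
  have hSAS : SA ⊆ S := by
    apply Finset.union_subset Finset.inter_subset_right
    exact (hP0sub.trans (Finset.sdiff_subset)).trans hYS
  have hSBT : SB ⊆ T := by
    apply Finset.union_subset
    · apply Finset.union_subset
      · intro x hx
        rw [Finset.mem_sdiff] at hx
        rcases Finset.mem_union.mp (hXsub hx.1) with h | h
        · exact absurd h hx.2
        · exact h
      · exact Finset.inter_subset_left.trans hYT
    · exact (Finset.sdiff_subset.trans Finset.sdiff_subset).trans hYT
  -- card bounds
  have hSAcard : SA.card ≤ K := by
    calc SA.card ≤ (X ∩ S).card + P0.card := Finset.card_union_le _ _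
      _ ≤ K := by
        have h1 : (X ∩ S).card ≤ X.card := Finset.card_le_card Finset.inter_subset_left
        omega
  have hSBcard : SB.card ≤ K := by
    have h1 : SB.card ≤ (X \ S).card + (Y ∩ X).card + Q0.card := by
      calc SB.card ≤ ((X \ S) ∪ (Y ∩ X)).card + Q0.card := Finset.card_union_le _ _
        _ ≤ (X \ S).card + (Y ∩ X).card + Q0.card := by
          have := Finset.card_union_le (X \ S) (Y ∩ X)
          omega
    omega
  -- disjointness facts
  have hdisjA : Disjoint (X ∩ S) P0 := by
    refine Finset.disjoint_left.mpr ?_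
    intro a ha hb
    exact (Finset.mem_sdiff.mp (hP0sub hb)).2 (Finset.mem_inter.mp ha).1
  have hdisjB1 : Disjoint (X \ S) (Y ∩ X) := by
    refine Finset.disjoint_left.mpr ?_
    intro a ha hb
    exact (Finset.mem_sdiff.mp ha).2 (hYS (Finset.mem_inter.mp hb).1)
  have hdisjB2 : Disjoint ((X \ S) ∪ (Y ∩ X)) Q0 := by
    refine Finset.disjoint_right.mpr ?_
    intro a ha hb
    have haX : a ∉ X := (Finset.mem_sdiff.mp ((Finset.sdiff_subset) ha)).2
    rcases Finset.mem_union.mp hb with h | h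
    · exact haX (Finset.mem_sdiff.mp h).1
    · exact haX (Finset.mem_inter.mp h).2
  -- sum identity
  have hsumid : ∑ a ∈ SA, w a + ∑ a ∈ SB, w a = ∑ a ∈ X, w a + ∑ a ∈ Y, w a := by
    rw [hSA, hSB, Finset.sum_union hdisjA, Finset.sum_union hdisjB2,
      Finset.sum_union hdisjB1]
    have e1 : ∑ a ∈ X ∩ S, w a + ∑ a ∈ X \ S, w a = ∑ a ∈ X, w a :=
      Finset.sum_inter_add_sum_sdiff X S w
    have e2 : ∑ a ∈ Y ∩ X, w a + ∑ a ∈ Y \ X, w a = ∑ a ∈ Y, w a :=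
      Finset.sum_inter_add_sum_sdiff Y X w
    have e3 : ∑ a ∈ P0, w a + ∑ a ∈ Q0, w a = ∑ a ∈ Y \ X, w a := by
      rw [hQ0, ← Finset.sum_inter_add_sum_sdiff (Y \ X) P0 w,
        Finset.inter_eq_right.mpr hP0sub]
    linarith
  -- finish
  have hA : ∑ a ∈ SA, w a ≤ topKSum w K S :=
    sum_le_topKSum_s3 hSAS hSAcard (fun a ha => hw a (Finset.mem_union_left _ ha))
  have hB : ∑ a ∈ SB, w a ≤ topKSum w K T :=
    sum_le_topKSum_s3 hSBT hSBcard (fun a ha => hw a (Finset.mem_union_right _ ha))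
  linarith [hXsum, hYsum]

/-- For every `λ > 0`, the selection objective `h` is a submodular set function
on the subsets of `B_u`. -/
theorem selObj_lambda_pos_submodular {β ν : Type*} [DecidableEq β]
    (Bu Bs : Finset β) (N : Finset ν) (f : ν → β → ℝ) (K m : ℕ) (lam : ℝ)
    (hBu : Bu.Nonempty) (hN : N.Nonempty) (hdisj : Disjoint Bs Bu)
    (hK : 1 ≤ K) (hm : 1 ≤ m) (hlam : 0 < lam)
    (hf : ∀ n ∈ N, ∀ b ∈ Bs ∪ Bu, 0 ≤ f n b) :
    ∀ A B : Finset β, A ⊆ Bu → B ⊆ Bu →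
      selObj N f K Bs lam m (A ∩ B) + selObj N f K Bs lam m (A ∪ B) ≤
        selObj N f K Bs lam m A + selObj N f K Bs lam m B := by
  intro A B hA hB
  have hinter : Bs ∪ A ∩ B = (Bs ∪ A) ∩ (Bs ∪ B) := Finset.union_inter_distrib_left Bs A B
  have hunion : Bs ∪ (A ∪ B) = (Bs ∪ A) ∪ (Bs ∪ B) := Finset.union_union_distrib_left Bs A B
  -- submodularity of the topKSum part, summed over n
  have hS : ∑ n ∈ N, topKSum (f n) K (Bs ∪ A ∩ B) + ∑ n ∈ N, topKSum (f n) K (Bs ∪ (A ∪ B)) ≤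
      ∑ n ∈ N, topKSum (f n) K (Bs ∪ A) + ∑ n ∈ N, topKSum (f n) K (Bs ∪ B) := by
    rw [← Finset.sum_add_distrib, ← Finset.sum_add_distrib]
    apply Finset.sum_le_sum
    intro n hn
    rw [hinter, hunion]
    apply topKSum_submodular
    intro a ha
    apply hf n hn
    rcases Finset.mem_union.mp ha with h | h
    all_goals rcases Finset.mem_union.mp h with h' | h'
    · exact Finset.mem_union_left _ h'
    · exact Finset.mem_union_right _ (hA h')
    · exact Finset.mem_union_left _ h'
    · exact Finset.mem_union_right _ (hB h')
  -- modularity of the linear part, per n and summed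
  have hL : ∑ n ∈ N, ∑ u ∈ Bs ∪ A ∩ B, f n u + ∑ n ∈ N, ∑ u ∈ Bs ∪ (A ∪ B), f n u =
      ∑ n ∈ N, ∑ u ∈ Bs ∪ A, f n u + ∑ n ∈ N, ∑ u ∈ Bs ∪ B, f n u := by
    rw [← Finset.sum_add_distrib, ← Finset.sum_add_distrib]
    apply Finset.sum_congr rfl
    intro n _
    rw [hinter, hunion, add_comm]
    exact Finset.sum_union_inter
  have hc1 : (0 : ℝ) ≤ 1 / ((N.card : ℝ) * (K : ℝ)) := by positivity
  simp only [selObj]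
  set c1 := 1 / ((N.card : ℝ) * (K : ℝ)) with hc1def
  set c2 := lam / ((N.card : ℝ) * ((Bs.card : ℝ) + (m : ℝ))) with hc2def
  have h1 := mul_le_mul_of_nonneg_left hS hc1
  have h2 : c2 * (∑ n ∈ N, ∑ u ∈ Bs ∪ A ∩ B, f n u + ∑ n ∈ N, ∑ u ∈ Bs ∪ (A ∪ B), f n u) =
      c2 * (∑ n ∈ N, ∑ u ∈ Bs ∪ A, f n u + ∑ n ∈ N, ∑ u ∈ Bs ∪ B, f n u) := by rw [hL]
  rw [mul_add] at h1
  rw [mul_add, mul_add] at h2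
  linarith
end

section
/- Suppose λ = 0 and B_s = ∅, so h(U) = (1/(|N|·K)) Σ_{n∈N} M^K(n,U), and suppose K·|N| ≤ m ≤ |B_u|. Then max{ h(U) : U ⊆ B_u, |U| = m } = h(B_u). Moreover, any U ⊆ B_u with |U| = m satisfying M^K(n,U) = M^K(n,B_u) for every n ∈ N attains this maximum, and such a U exists (in particular, the greedy algorithm that repeatedly adds, cycling over the novel classes, an unchosen base class of maximal similarity to the current novel class returns an optimal solution). -/
/-- topk on a multiset of reals -/
noncomputable def topk (K : ℕ) (s : Multiset ℝ) : ℝ :=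
  ((s.sort (· ≥ ·)).take K).sum

lemma topKSum_eq_topk {α : Type*} (w : α → ℝ) (K : ℕ) (A : Finset α) :
    topKSum w K A = topk K (A.val.map w) := rfl

lemma sort_coe_eq {l : List ℝ} (hl : List.Pairwise (· ≥ ·) l) :
    Multiset.sort (↑l : Multiset ℝ) (· ≥ ·) = l := by
  refine List.Perm.eq_of_pairwise' (Multiset.pairwise_sort _ _) hl ?_
  have : (↑(Multiset.sort (↑l : Multiset ℝ) (· ≥ ·)) : Multiset ℝ) = ↑l :=
    Multiset.sort_eq _ _
  exact Multiset.coe_eq_coe.mp this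

/-- take sums increase with K for nonneg multisets -/
lemma topk_mono_K {K K' : ℕ} (h : K ≤ K') (s : Multiset ℝ) (hs : ∀ x ∈ s, 0 ≤ x) :
    topk K s ≤ topk K' s := by
  unfold topk
  set l := s.sort (· ≥ ·) with hl
  have h1 : (l.take K).Sublist (l.take K') := by
    have : l.take K = (l.take K').take K := by rw [List.take_take, min_eq_left h]
    rw [this]; exact List.take_sublist _ _
  refine h1.sum_le_sum ?_
  intro a ha
  exact hs a ((Multiset.mem_sort _).mp (List.mem_of_mem_take ha))

/-- core majorization: any sub-multiset's sum is at most the top-(its card) sum -/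
lemma sum_le_topk_card (s : Multiset ℝ) (hs : ∀ x ∈ s, 0 ≤ x)
    (u : Multiset ℝ) (hu : u ≤ s) : u.sum ≤ topk (Multiset.card u) s := by
  induction s using Multiset.strongInductionOn generalizing u with
  | ih s ih =>
  rcases eq_or_ne u 0 with rfl | hu0
  · simp [topk]
  have hs0 : s ≠ 0 := by
    rintro rfl
    exact hu0 (le_antisymm hu (Multiset.zero_le u))
  have hlne : s.sort (· ≥ ·) ≠ [] := by
    intro h
    apply hs0
    have := Multiset.length_sort (α := ℝ) (· ≥ ·) (s := s)
    rw [h] at this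
    rw [List.length_nil] at this
    exact Multiset.card_eq_zero.mp this.symm
  obtain ⟨a, t, hlat⟩ := List.exists_cons_of_ne_nil hlne
  have hsorted : List.Pairwise (· ≥ ·) (s.sort (· ≥ ·)) := Multiset.pairwise_sort _ _
  rw [hlat] at hsorted
  have hamax : ∀ x ∈ t, x ≤ a := (List.pairwise_cons.mp hsorted).1
  have htsorted : List.Pairwise (· ≥ ·) t := (List.pairwise_cons.mp hsorted).2
  have hseq : s = a ::ₘ (↑t : Multiset ℝ) := by
    have h2 : (↑(s.sort (· ≥ ·)) : Multiset ℝ) = s := Multiset.sort_eq _ _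
    rw [hlat] at h2
    exact h2.symm
  have hta : (↑t : Multiset ℝ) < s := by
    rw [hseq]; exact Multiset.lt_cons_self _ _
  have htnn : ∀ x ∈ (↑t : Multiset ℝ), 0 ≤ x := fun x hx => hs x (Multiset.mem_of_le hta.le hx)
  have hanns : a ∈ s := by rw [hseq]; exact Multiset.mem_cons_self _ _
  have hann : 0 ≤ a := hs a hanns
  have htopk_t : ∀ k, topk k (↑t : Multiset ℝ) = (t.take k).sum := by
    intro k; unfold topk; rw [sort_coe_eq htsorted]
  have htopk_s : ∀ k, topk (k + 1) s = a + (t.take k).sum := by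
    intro k; unfold topk; rw [hlat]; simp [List.take_succ_cons]
  by_cases ha : a ∈ u
  · set e := u.erase a with he
    have hue : u = a ::ₘ e := (Multiset.cons_erase ha).symm
    have hes : e ≤ (↑t : Multiset ℝ) := by
      have h3 : u.erase a ≤ s.erase a := Multiset.erase_le_erase a hu
      rwa [hseq, Multiset.erase_cons_head] at h3
    have hIH := ih (↑t : Multiset ℝ) hta htnn e hes
    rw [htopk_t] at hIH
    have hcard : Multiset.card u = Multiset.card e + 1 := by
      rw [hue]; simp
    rw [hcard, htopk_s, hue, Multiset.sum_cons]
    linarith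
  · have hut : u ≤ (↑t : Multiset ℝ) := by
      rw [Multiset.le_iff_count]
      intro x
      rcases eq_or_ne x a with rfl | hxa
      · simp [Multiset.count_eq_zero_of_notMem ha]
      · have := (Multiset.le_iff_count.mp hu) x
        rwa [hseq, Multiset.count_cons_of_ne hxa] at this
    have hIH := ih (↑t : Multiset ℝ) hta htnn u hut
    rw [htopk_t] at hIH
    refine hIH.trans ?_
    -- (t.take j).sum ≤ topk j s for all j
    rcases Nat.eq_zero_or_pos (Multiset.card u) with hj | hj
    · simp [hj, topk]
    obtain ⟨k, hk⟩ := Nat.exists_eq_add_of_lt hj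
    rw [zero_add] at hk
    rw [hk, htopk_s]
    by_cases hkl : k < t.length
    · rw [List.sum_take_succ t k hkl]
      have : t[k] ≤ a := hamax _ (List.getElem_mem hkl)
      linarith
    · push_neg at hkl
      rw [List.take_of_length_le (by omega), List.take_of_length_le hkl]
      linarith

lemma sum_le_topk (s : Multiset ℝ) (hs : ∀ x ∈ s, 0 ≤ x)
    (u : Multiset ℝ) (hu : u ≤ s) {K : ℕ} (hcard : Multiset.card u ≤ K) :
    u.sum ≤ topk K s :=
  (sum_le_topk_card s hs u hu).trans (topk_mono_K hcard s hs)

/-- the top-K part exists as a sub-multiset -/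
lemma exists_topk_part (s : Multiset ℝ) (K : ℕ) :
    ∃ u ≤ s, Multiset.card u ≤ K ∧ u.sum = topk K s := by
  refine ⟨↑((s.sort (· ≥ ·)).take K), ?_, ?_, ?_⟩
  · have h1 : ((s.sort (· ≥ ·)).take K).Sublist (s.sort (· ≥ ·)) := List.take_sublist _ _
    have h2 : (↑((s.sort (· ≥ ·)).take K) : Multiset ℝ) ≤ ↑(s.sort (· ≥ ·)) :=
      Multiset.coe_le.mpr h1.subperm
    rwa [Multiset.sort_eq] at h2
  · simp
  · simp [topk, Multiset.sum_coe]

/-- monotonicity in the multiset -/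
lemma topk_mono (s s' : Multiset ℝ) (h : s ≤ s') (hs' : ∀ x ∈ s', 0 ≤ x) (K : ℕ) :
    topk K s ≤ topk K s' := by
  obtain ⟨u, hus, hcard, hsum⟩ := exists_topk_part s K
  rw [← hsum]
  exact sum_le_topk s' hs' u (hus.trans h) hcard

lemma exists_of_le_map {α β : Type*} (f : α → β) (u : Multiset β) (s : Multiset α)
    (h : u ≤ s.map f) : ∃ v ≤ s, v.map f = u := by
  classical
  induction u using Multiset.induction generalizing s with
  | empty => exact ⟨0, Multiset.zero_le _, rfl⟩
  | cons a u ih =>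
    have ha : a ∈ s.map f := Multiset.mem_of_le h (Multiset.mem_cons_self a u)
    obtain ⟨b, hb, rfl⟩ := Multiset.mem_map.mp ha
    have h2 : u ≤ (s.map f).erase (f b) := by
      have h3 := Multiset.erase_le_erase (f b) h
      rwa [Multiset.erase_cons_head] at h3
    rw [← Multiset.map_erase_of_mem f s hb] at h2
    obtain ⟨v, hv, hmap⟩ := ih _ h2
    refine ⟨b ::ₘ v, ?_, by simp [hmap]⟩
    calc b ::ₘ v ≤ b ::ₘ s.erase b := Multiset.cons_le_cons _ hv
      _ = s := Multiset.cons_erase hb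

/-- For `λ = 0`, `B_s = ∅` and `K·|N| ≤ m ≤ |B_u|`, the maximum of `h` over subsets
of `B_u` of cardinality `m` equals `h(B_u)`: every feasible `U` has `h(U) ≤ h(B_u)`,
any feasible `U` with `M^K(n,U) = M^K(n,B_u)` for all `n ∈ N` attains `h(B_u)`,
and such a `U` exists (it is produced by the greedy algorithm on novel classes). -/
theorem selObj_max_eq_of_large_m {β ν : Type*} [DecidableEq β]
    (Bu : Finset β) (N : Finset ν) (f : ν → β → ℝ) (K m : ℕ)
    (hBu : Bu.Nonempty) (hN : N.Nonempty) (hK : 1 ≤ K)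
    (hf : ∀ n ∈ N, ∀ b ∈ Bu, 0 ≤ f n b)
    (hm1 : K * N.card ≤ m) (hm2 : m ≤ Bu.card) :
    (∀ U ⊆ Bu, U.card = m → selObj N f K ∅ 0 m U ≤ selObj N f K ∅ 0 m Bu) ∧
    (∀ U ⊆ Bu, U.card = m → (∀ n ∈ N, topKSum (f n) K U = topKSum (f n) K Bu) →
      selObj N f K ∅ 0 m U = selObj N f K ∅ 0 m Bu) ∧
    (∃ U ⊆ Bu, U.card = m ∧ ∀ n ∈ N, topKSum (f n) K U = topKSum (f n) K Bu) := by
  classical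
  have hsel : ∀ U : Finset β, selObj N f K ∅ 0 m U
      = (1 / ((N.card : ℝ) * (K : ℝ))) * ∑ n ∈ N, topKSum (f n) K U := by
    intro U
    simp [selObj]
  have hnnBu : ∀ n ∈ N, ∀ x ∈ Bu.val.map (f n), 0 ≤ x := by
    intro n hn x hx
    obtain ⟨b, hb, rfl⟩ := Multiset.mem_map.mp hx
    exact hf n hn b hb
  have hmono : ∀ U ⊆ Bu, ∀ n ∈ N, topKSum (f n) K U ≤ topKSum (f n) K Bu := by
    intro U hU n hn
    rw [topKSum_eq_topk, topKSum_eq_topk]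
    refine topk_mono _ _ ?_ (hnnBu n hn) K
    exact Multiset.map_le_map (Finset.val_le_iff.mpr hU)
  refine ⟨?_, ?_, ?_⟩
  · intro U hU _
    rw [hsel U, hsel Bu]
    have hc : (0:ℝ) ≤ 1 / ((N.card : ℝ) * (K : ℝ)) := by positivity
    exact mul_le_mul_of_nonneg_left (Finset.sum_le_sum (hmono U hU)) hc
  · intro U _ _ heq
    rw [hsel U, hsel Bu]
    congr 1
    exact Finset.sum_congr rfl heq
  · -- existence
    have hS : ∀ n ∈ N, ∃ S : Finset β, S ⊆ Bu ∧ S.card ≤ K ∧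
        (S.val.map (f n)).sum = topKSum (f n) K Bu := by
      intro n hn
      obtain ⟨u, hus, hcard, hsum⟩ := exists_topk_part (Bu.val.map (f n)) K
      obtain ⟨v, hv, hmap⟩ := exists_of_le_map (f n) u Bu.val hus
      refine ⟨⟨v, Multiset.nodup_of_le hv Bu.nodup⟩, ?_, ?_, ?_⟩
      · exact Finset.val_le_iff.mp hv
      · show Multiset.card v ≤ K
        have : Multiset.card (v.map (f n)) = Multiset.card v := Multiset.card_map _ _
        rw [hmap] at this
        omega
      · rw [topKSum_eq_topk, ← hsum]
        show (v.map (f n)).sum = u.sum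
        rw [hmap]
    choose! S hS1 hS2 hS3 using hS
    set U0 := N.biUnion S with hU0
    have hU0sub : U0 ⊆ Bu := by
      intro x hx
      obtain ⟨n, hn, hxn⟩ := Finset.mem_biUnion.mp hx
      exact hS1 n hn hxn
    have hU0card : U0.card ≤ m := by
      calc U0.card ≤ ∑ n ∈ N, (S n).card := Finset.card_biUnion_le
        _ ≤ ∑ _n ∈ N, K := Finset.sum_le_sum hS2
        _ = N.card * K := by rw [Finset.sum_const, smul_eq_mul]
        _ = K * N.card := Nat.mul_comm _ _
        _ ≤ m := hm1
    obtain ⟨U, hU0U, hUBu, hUcard⟩ := Finset.exists_subsuperset_card_eq hU0sub hU0card hm2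
    refine ⟨U, hUBu, hUcard, ?_⟩
    intro n hn
    refine le_antisymm (hmono U hUBu n hn) ?_
    have hSn : S n ⊆ U := fun x hx =>
      hU0U (Finset.mem_biUnion.mpr ⟨n, hn, hx⟩)
    rw [← hS3 n hn, topKSum_eq_topk]
    refine sum_le_topk _ ?_ _ ?_ ?_
    · intro x hx
      obtain ⟨b, hb, rfl⟩ := Multiset.mem_map.mp hx
      exact hf n hn b (hUBu hb)
    · exact Multiset.map_le_map (Finset.val_le_iff.mpr hSn)
    · rw [Multiset.card_map]
      exact hS2 n hn
end

section
/- Let F be the multilinear extension of the selection objective h. For each n ∈ N and each finite set A of base classes, let τ_K^n(A) denote the K-th largest value of f(n,·) over A if |A| ≥ K and τ_K^n(A) = 0 otherwise. Then for every x ∈ [0,1]^{B_u} and every u ∈ B_u, F(x ∨ u) − F(x ∧ (B_u − u)) = (1/(|N|·K)) Σ_{n∈N} Σ_{S ⊆ B_u\{u}} [ Π_{v∈S} x_v · Π_{v∈B_u\({u}∪S)} (1 − x_v) ] · max( f(n,u) − τ_K^n(S ∪ B_s), 0 ) − (λ/(|N|·(|B_s|+m))) Σ_{n∈N} f(n,u).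 Equivalently, the marginal contribution of u equals, for each novel class n, the expectation over a random set S (including each v ∈ B_u\{u} independently with probability x_v) of max(f(n,u) − τ_K^n(S ∪ B_s), 0), averaged over n and divided by K, minus the modular penalty term. -/
/-- The K-th order statistic `τ_K(A)`: the K-th largest value of `w` over `A`
if `|A| ≥ K`, and `0` otherwise. -/
noncomputable def kthLargest {α : Type*} (w : α → ℝ) (K : ℕ) (A : Finset α) : ℝ :=
  ((A.val.map w).sort (· ≥ ·)).getD (K - 1) 0

/-- The multilinear extension of a set function `h` over the ground set `Bu`:
`F(x) = Σ_{S⊆Bu} h(S) Π_{v∈S} x_v Π_{v∈Bu\S} (1 − x_v)`. -/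
noncomputable def multilinearExtOn {β : Type*} [DecidableEq β]
    (Bu : Finset β) (h : Finset β → ℝ) (x : β → ℝ) : ℝ :=
  ∑ S ∈ Bu.powerset, h S * (∏ v ∈ S, x v) * ∏ v ∈ Bu \ S, (1 - x v)

lemma sum_take_getD (l : List ℝ) (j : ℕ) :
    (l.take (j+1)).sum = (l.take j).sum + l.getD j 0 := by
  by_cases h : j < l.length
  · rw [List.sum_take_succ l j h, List.getD_eq_getElem l 0 h]
  · push_neg at h
    rw [List.take_of_length_le h, List.take_of_length_le (le_trans h (Nat.le_succ j)),
      List.getD_eq_default l 0 h, add_zero]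

lemma take_sum_orderedInsert (a : ℝ) (ha : 0 ≤ a) :
    ∀ (l : List ℝ), l.Pairwise (· ≥ ·) → ∀ K : ℕ, 1 ≤ K →
    ((l.orderedInsert (· ≥ ·) a).take K).sum = (l.take K).sum + max (a - l.getD (K-1) 0) 0 := by
  intro l
  induction l with
  | nil =>
    intro _ K hK
    obtain ⟨K', rfl⟩ : ∃ K', K = K' + 1 := ⟨K - 1, by omega⟩
    simp [List.orderedInsert, max_eq_left ha]
  | cons b t ih =>
    intro hsort K hK
    obtain ⟨K', rfl⟩ : ∃ K', K = K' + 1 := ⟨K - 1, by omega⟩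
    simp only [List.orderedInsert, Nat.add_sub_cancel]
    by_cases hab : a ≥ b
    · rw [if_pos hab]
      have hg : a ≥ (b :: t).getD K' 0 := by
        by_cases h : K' < (b :: t).length
        · rw [List.getD_eq_getElem _ 0 h]
          have hmem : (b::t)[K'] ∈ b :: t := List.getElem_mem h
          rcases List.mem_cons.1 hmem with h1 | h1
          · rw [h1]; exact hab
          · exact le_trans (List.rel_of_pairwise_cons hsort h1) hab
        · push_neg at h; rw [List.getD_eq_default _ 0 h]; exact ha
      rw [max_eq_left (by linarith)]
      rw [List.take_succ_cons, List.sum_cons, sum_take_getD]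
      ring
    · rw [if_neg hab]
      push_neg at hab
      rw [List.take_succ_cons, List.take_succ_cons, List.sum_cons, List.sum_cons]
      rcases Nat.eq_zero_or_pos K' with h0 | h0
      · subst h0
        simp [max_eq_right (by linarith : a - b ≤ 0)]
      · rw [ih hsort.of_cons K' h0]
        have : (b :: t).getD K' 0 = t.getD (K' - 1) 0 := by
          obtain ⟨K'', rfl⟩ : ∃ K'', K' = K'' + 1 := ⟨K' - 1, by omega⟩
          simp [List.getD_cons_succ]
        rw [this]
        ring

lemma sort_cons_eq (a : ℝ) (s : Multiset ℝ) :
    (a ::ₘ s).sort (· ≥ ·) = (s.sort (· ≥ ·)).orderedInsert (· ≥ ·) a := by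
  have h1 : ((a ::ₘ s).sort (· ≥ ·)).Perm (a :: s.sort (· ≥ ·)) := by
    rw [← Multiset.coe_eq_coe, Multiset.sort_eq, ← Multiset.cons_coe, Multiset.sort_eq]
  exact List.Perm.eq_of_pairwise'
    (Multiset.pairwise_sort _ _)
    (List.Pairwise.orderedInsert a _ (Multiset.pairwise_sort _ _))
    (h1.trans (List.perm_orderedInsert (· ≥ ·) a (s.sort (· ≥ ·))).symm)

lemma topKSum_insert {α : Type*} [DecidableEq α] (w : α → ℝ) (K : ℕ) (hK : 1 ≤ K)
    (A : Finset α) (u : α) (hu : u ∉ A) (hw : 0 ≤ w u) :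
    topKSum w K (insert u A) = topKSum w K A + max (w u - kthLargest w K A) 0 := by
  have hval : (insert u A).val = u ::ₘ A.val := Finset.insert_val_of_notMem hu
  rw [topKSum, topKSum, kthLargest, hval, Multiset.map_cons, sort_cons_eq]
  exact take_sum_orderedInsert (w u) hw _ (Multiset.pairwise_sort _ _) K hK

lemma mle_update_one {β : Type*} [DecidableEq β] (E : Finset β) (u : β) (huE : u ∉ E)
    (h : Finset β → ℝ) (x : β → ℝ) :
    multilinearExtOn (insert u E) h (Function.update x u 1) =
    ∑ S ∈ E.powerset, ((∏ v ∈ S, x v) * ∏ v ∈ E \ S, (1 - x v)) * h (insert u S) := by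
  rw [multilinearExtOn, Finset.sum_powerset_insert huE]
  have h0 : ∑ S ∈ E.powerset,
      h S * (∏ v ∈ S, Function.update x u 1 v) * ∏ v ∈ insert u E \ S, (1 - Function.update x u 1 v) = 0 := by
    apply Finset.sum_eq_zero
    intro S hS
    have hSE := Finset.mem_powerset.1 hS
    have huS : u ∈ insert u E \ S :=
      Finset.mem_sdiff.2 ⟨Finset.mem_insert_self _ _, fun hc => huE (hSE hc)⟩
    rw [Finset.prod_eq_zero huS (by simp), mul_zero]
  rw [h0, zero_add]
  apply Finset.sum_congr rfl
  intro S hS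
  have hSE := Finset.mem_powerset.1 hS
  have huS : u ∉ S := fun hc => huE (hSE hc)
  have hins : insert u E \ insert u S = E \ S := by
    ext v
    simp only [Finset.mem_sdiff, Finset.mem_insert, not_or]
    constructor
    · rintro ⟨h1 | h1, h2, h3⟩
      · exact absurd h1 h2
      · exact ⟨h1, h3⟩
    · rintro ⟨h1, h2⟩
      exact ⟨Or.inr h1, fun he => huE (he ▸ h1), h2⟩
  rw [hins, Finset.prod_insert huS, Function.update_self]
  have hp1 : ∏ v ∈ S, Function.update x u 1 v = ∏ v ∈ S, x v :=
    Finset.prod_congr rfl fun v hv => Function.update_of_ne (fun he => huS (by rw [← he]; exact hv)) _ _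
  have hp2 : ∏ v ∈ E \ S, (1 - Function.update x u 1 v) = ∏ v ∈ E \ S, (1 - x v) :=
    Finset.prod_congr rfl fun v hv => by
      rw [Function.update_of_ne (fun he => huE (by rw [← he]; exact (Finset.mem_sdiff.1 hv).1)) _ _]
  rw [hp1, hp2]
  ring

lemma mle_update_zero {β : Type*} [DecidableEq β] (E : Finset β) (u : β) (huE : u ∉ E)
    (h : Finset β → ℝ) (x : β → ℝ) :
    multilinearExtOn (insert u E) h (Function.update x u 0) =
    ∑ S ∈ E.powerset, ((∏ v ∈ S, x v) * ∏ v ∈ E \ S, (1 - x v)) * h S := by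
  rw [multilinearExtOn, Finset.sum_powerset_insert huE]
  have h0 : ∑ S ∈ E.powerset,
      h (insert u S) * (∏ v ∈ insert u S, Function.update x u 0 v)
        * ∏ v ∈ insert u E \ insert u S, (1 - Function.update x u 0 v) = 0 := by
    apply Finset.sum_eq_zero
    intro S hS
    have hSE := Finset.mem_powerset.1 hS
    have huS : u ∉ S := fun hc => huE (hSE hc)
    rw [Finset.prod_eq_zero (Finset.mem_insert_self u S) (by simp), mul_zero, zero_mul]
  rw [h0, add_zero]
  apply Finset.sum_congr rfl
  intro S hS
  have hSE := Finset.mem_powerset.1 hS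
  have huS : u ∉ S := fun hc => huE (hSE hc)
  have hins : insert u E \ S = insert u (E \ S) := Finset.insert_sdiff_of_notMem _ huS
  have huES : u ∉ E \ S := fun hc => huE (Finset.mem_sdiff.1 hc).1
  rw [hins, Finset.prod_insert huES, Function.update_self]
  have hp1 : ∏ v ∈ S, Function.update x u 0 v = ∏ v ∈ S, x v :=
    Finset.prod_congr rfl fun v hv => Function.update_of_ne (fun he => huS (by rw [← he]; exact hv)) _ _
  have hp2 : ∏ v ∈ E \ S, (1 - Function.update x u 0 v) = ∏ v ∈ E \ S, (1 - x v) :=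
    Finset.prod_congr rfl fun v hv => by
      rw [Function.update_of_ne (fun he => huES (by rw [← he]; exact hv)) _ _]
  rw [hp1, hp2]
  ring


/-- Marginal of the multilinear extension of the selection objective:
`F(x ∨ u) − F(x ∧ (B_u − u))` equals the expectation, over a random set `S`
including each `v ∈ B_u \ {u}` independently with probability `x_v`, of
`max(f(n,u) − τ_K^n(S ∪ B_s), 0)`, averaged over the novel classes `n` and
divided by `K`, minus the modular penalty term `(λ/(|N|·(|B_s|+m))) Σ_{n∈N} f(n,u)`. -/
theorem multilinearExt_marginal_formula {β ν : Type*} [DecidableEq β]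
    (Bu Bs : Finset β) (N : Finset ν) (f : ν → β → ℝ) (K m : ℕ) (lam : ℝ)
    (hBu : Bu.Nonempty) (hN : N.Nonempty) (hdisj : Disjoint Bs Bu)
    (hK : 1 ≤ K) (hm : 1 ≤ m) (hlam : 0 ≤ lam)
    (hf : ∀ n ∈ N, ∀ b ∈ Bs ∪ Bu, 0 ≤ f n b)
    (x : β → ℝ) (hx : ∀ v ∈ Bu, x v ∈ Set.Icc (0 : ℝ) 1) (u : β) (hu : u ∈ Bu) :
    multilinearExtOn Bu (selObj N f K Bs lam m) (Function.update x u 1)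
      - multilinearExtOn Bu (selObj N f K Bs lam m) (Function.update x u 0) =
    (1 / ((N.card : ℝ) * (K : ℝ))) *
        ∑ n ∈ N, ∑ S ∈ (Bu.erase u).powerset,
          ((∏ v ∈ S, x v) * ∏ v ∈ (Bu.erase u) \ S, (1 - x v)) *
            max (f n u - kthLargest (f n) K (S ∪ Bs)) 0
      - (lam / ((N.card : ℝ) * ((Bs.card : ℝ) + (m : ℝ)))) * ∑ n ∈ N, f n u := by
  set E := Bu.erase u with hE
  have huE : u ∉ E := Finset.notMem_erase u Bu
  have hBuE : Bu = insert u E := (Finset.insert_erase hu).symm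
  rw [hBuE, mle_update_one E u huE, mle_update_zero E u huE, ← Finset.sum_sub_distrib]
  set c1 : ℝ := 1 / ((N.card : ℝ) * (K : ℝ)) with hc1
  set c2 : ℝ := lam / ((N.card : ℝ) * ((Bs.card : ℝ) + (m : ℝ))) with hc2
  -- marginal of selObj
  have hmarg : ∀ S ∈ E.powerset,
      selObj N f K Bs lam m (insert u S) - selObj N f K Bs lam m S =
      c1 * ∑ n ∈ N, max (f n u - kthLargest (f n) K (S ∪ Bs)) 0 - c2 * ∑ n ∈ N, f n u := by
    intro S hS
    have hSE := Finset.mem_powerset.1 hS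
    have huBsS : u ∉ Bs ∪ S := by
      simp only [Finset.mem_union, not_or]
      exact ⟨fun hc => (Finset.disjoint_left.1 hdisj hc) hu,
        fun hc => huE (hSE hc)⟩
    have hcomm : S ∪ Bs = Bs ∪ S := Finset.union_comm _ _
    have hins : Bs ∪ insert u S = insert u (Bs ∪ S) := Finset.union_insert _ _ _
    rw [selObj, selObj]
    have h1 : ∀ n ∈ N, topKSum (f n) K (Bs ∪ insert u S) =
        topKSum (f n) K (Bs ∪ S) + max (f n u - kthLargest (f n) K (S ∪ Bs)) 0 := by
      intro n hn
      rw [hins, hcomm]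
      exact topKSum_insert (f n) K hK (Bs ∪ S) u huBsS
        (hf n hn u (Finset.mem_union_right _ hu))
    have h2 : ∀ n ∈ N, ∑ v ∈ Bs ∪ insert u S, f n v = (∑ v ∈ Bs ∪ S, f n v) + f n u := by
      intro n hn
      rw [hins, Finset.sum_insert huBsS, add_comm]
    rw [Finset.sum_congr rfl h1, Finset.sum_congr rfl h2,
      Finset.sum_add_distrib, Finset.sum_add_distrib]
    ring
  rw [Finset.sum_congr rfl (fun S hS => by
    rw [show ((∏ v ∈ S, x v) * ∏ v ∈ E \ S, (1 - x v)) * selObj N f K Bs lam m (insert u S)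
        - ((∏ v ∈ S, x v) * ∏ v ∈ E \ S, (1 - x v)) * selObj N f K Bs lam m S
        = ((∏ v ∈ S, x v) * ∏ v ∈ E \ S, (1 - x v)) *
          (selObj N f K Bs lam m (insert u S) - selObj N f K Bs lam m S) by ring,
      hmarg S hS])]
  have hw1 : ∑ S ∈ E.powerset, (∏ v ∈ S, x v) * ∏ v ∈ E \ S, (1 - x v) = 1 := by
    rw [← Finset.prod_add]
    simp
  have hswap : ∑ S ∈ E.powerset, ((∏ v ∈ S, x v) * ∏ v ∈ E \ S, (1 - x v)) *
      (c1 * ∑ n ∈ N, max (f n u - kthLargest (f n) K (S ∪ Bs)) 0) =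
      c1 * ∑ n ∈ N, ∑ S ∈ E.powerset, ((∏ v ∈ S, x v) * ∏ v ∈ E \ S, (1 - x v)) *
        max (f n u - kthLargest (f n) K (S ∪ Bs)) 0 := by
    calc ∑ S ∈ E.powerset, ((∏ v ∈ S, x v) * ∏ v ∈ E \ S, (1 - x v)) *
          (c1 * ∑ n ∈ N, max (f n u - kthLargest (f n) K (S ∪ Bs)) 0)
        = ∑ S ∈ E.powerset, ∑ n ∈ N, c1 * (((∏ v ∈ S, x v) * ∏ v ∈ E \ S, (1 - x v)) *
            max (f n u - kthLargest (f n) K (S ∪ Bs)) 0) := by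
          refine Finset.sum_congr rfl fun S _ => ?_
          rw [Finset.mul_sum, Finset.mul_sum]
          exact Finset.sum_congr rfl fun n _ => by ring
      _ = ∑ n ∈ N, ∑ S ∈ E.powerset, c1 * (((∏ v ∈ S, x v) * ∏ v ∈ E \ S, (1 - x v)) *
            max (f n u - kthLargest (f n) K (S ∪ Bs)) 0) := Finset.sum_comm
      _ = _ := by
          rw [Finset.mul_sum]
          exact Finset.sum_congr rfl fun n _ => (Finset.mul_sum _ _ _).symm
  calc ∑ S ∈ E.powerset, ((∏ v ∈ S, x v) * ∏ v ∈ E \ S, (1 - x v)) *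
        (c1 * ∑ n ∈ N, max (f n u - kthLargest (f n) K (S ∪ Bs)) 0 - c2 * ∑ n ∈ N, f n u)
      = (∑ S ∈ E.powerset, ((∏ v ∈ S, x v) * ∏ v ∈ E \ S, (1 - x v)) *
          (c1 * ∑ n ∈ N, max (f n u - kthLargest (f n) K (S ∪ Bs)) 0))
        - (∑ S ∈ E.powerset, (∏ v ∈ S, x v) * ∏ v ∈ E \ S, (1 - x v)) * (c2 * ∑ n ∈ N, f n u) := by
        rw [Finset.sum_mul, ← Finset.sum_sub_distrib]
        apply Finset.sum_congr rfl
        intro S _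
        ring
    _ = _ := by rw [hswap, hw1, one_mul]
end

section
/- Let r and m be real numbers with 0 < m ≤ 0.08·r. Then (1 − m/(e·r))/e ≥ (1 + r/(2·√((r − m)·m)))^{−1}; that is, in the regime m ≤ 0.08·r the approximation guarantee (1 − m/(e·r))/e of the random greedy algorithm is at least the approximation guarantee (1 + r/(2√((r−m)m)))^{−1} of the continuous double greedy algorithm. -/
/-- In the regime `0 < m ≤ 0.08·r`, the approximation guarantee
`(1 − m/(e·r))/e` of the random greedy algorithm is at least the approximation
guarantee `(1 + r/(2√((r − m)·m)))⁻¹` of the continuous double greedy algorithm. -/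
theorem random_greedy_beats_continuous_double_greedy (r m : ℝ)
    (hm : 0 < m) (hmr : m ≤ 0.08 * r) :
    (1 + r / (2 * Real.sqrt ((r - m) * m)))⁻¹ ≤ (1 - m / (Real.exp 1 * r)) / Real.exp 1 := by
  have hr : 0 < r := by nlinarith
  have hrm : 0 < r - m := by nlinarith
  set s := Real.sqrt ((r - m) * m) with hs_def
  have hs : 0 < s := Real.sqrt_pos.mpr (by positivity)
  have hsle : s ≤ 0.2713 * r := by
    rw [hs_def, show (0.2713 : ℝ) * r = Real.sqrt ((0.2713 * r) ^ 2) by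
      rw [Real.sqrt_sq (by positivity)]]
    apply Real.sqrt_le_sqrt
    nlinarith [mul_nonneg (by linarith : (0:ℝ) ≤ 0.08 * r - m)
      (by nlinarith : (0:ℝ) ≤ 0.92 * r - m)]
  have hx : (1 : ℝ) / 0.5426 ≤ r / (2 * s) := by
    rw [div_le_div_iff₀ (by norm_num) (by positivity)]
    nlinarith
  have hE1 : Real.exp 1 < 2.7182818286 := Real.exp_one_lt_d9
  have hE2 : (2.7182818283 : ℝ) < Real.exp 1 := Real.exp_one_gt_d9
  have hEpos : (0 : ℝ) < Real.exp 1 := Real.exp_pos 1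
  have hmr' : m / (Real.exp 1 * r) ≤ 0.08 / Real.exp 1 := by
    rw [div_le_div_iff₀ (by positivity) hEpos]
    nlinarith
  have step1 : (1 + r / (2 * s))⁻¹ ≤ (1 + 1 / 0.5426 : ℝ)⁻¹ := by
    apply inv_anti₀ (by norm_num)
    linarith
  have step2 : ((1 + 1 / 0.5426 : ℝ))⁻¹ ≤ (1 - 0.08 / Real.exp 1) / Real.exp 1 := by
    rw [show ((1 + 1 / 0.5426 : ℝ))⁻¹ = 5426 / 15426 by norm_num,
      div_le_div_iff₀ (by norm_num) hEpos]
    have hc : (0.08 : ℝ) / Real.exp 1 * 15426 ≤ 1234.08 / 2.7182818283 := by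
      rw [div_mul_eq_mul_div]
      gcongr
      norm_num
    have hc' : (1234.08 : ℝ) / 2.7182818283 ≤ 454 := by norm_num
    nlinarith
  have step3 : (1 - 0.08 / Real.exp 1) / Real.exp 1 ≤ (1 - m / (Real.exp 1 * r)) / Real.exp 1 := by
    gcongr
  linarith
end
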